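/- Let S ⊆ Y = P^{n_1} × ... × P^{n_k} be a finite set with e(S) > 0. Then S has a unique kernel: there is exactly one subset S' ⊆ S such that e(S') = e(S) and e(S'') < e(S) for every proper subset S'' ⊊ S'. -/

import Mathlib

open scoped LinearAlgebra.Projectivization
open Projectivization

/-- The multiprojective space `Y = P^{n 0} × ... × P^{n (k-1)}` over `K`,
where `P^m = P(K^{m+1})`. -/
abbrev MultiProj (K : Type*) [Field K] {k : ℕ} (n : Fin k → ℕ) :=
  ∀ i : Fin k, ℙ K (Fin (n i + 1) → K)

/-- A vector representative of the Segre image `ν(x)` of a point `x ∈ Y`: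
the tensor product of representatives of the coordinates. -/
noncomputable def segreVec {K : Type*} [Field K] {k : ℕ} {n : Fin k → ℕ}
    (x : MultiProj K n) : PiTensorProduct K (fun i : Fin k => Fin (n i + 1) → K) :=
  PiTensorProduct.tprod K (fun i => (x i).rep)

/-- `e(S) = #S − 1 − dim⟨ν(S)⟩`, computed as `#S` minus the rank of the linear span
of vector representatives of `ν(S)`. -/
noncomputable def eSet {K : Type*} [Field K] {k : ℕ} {n : Fin k → ℕ}
    (S : Set (MultiProj K n)) : ℕ :=
  S.ncard - Module.finrank K ↥(Submodule.span K (segreVec '' S))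

/-- `S ⊆ Y` is nondegenerate: `π i '' S` spans `P^{n i}` for every `i`. -/
def Nondeg {K : Type*} [Field K] {k : ℕ} {n : Fin k → ℕ}
    (S : Set (MultiProj K n)) : Prop :=
  ∀ i : Fin k, Submodule.span K ((fun x => (x i).rep) '' S) = ⊤

/-- For products of `P^1`'s: `S` is nondegenerate iff each projection has ≥ 2 points. -/
def NondegPts {K : Type*} [Field K] {k : ℕ} {n : Fin k → ℕ}
    (S : Set (MultiProj K n)) : Prop :=
  ∀ i : Fin k, ∃ p ∈ S, ∃ q ∈ S, p i ≠ q i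

/-- `S` is a circuit: linearly dependent, but every proper subset is linearly independent. -/
def IsCircuit {K : Type*} [Field K] {k : ℕ} {n : Fin k → ℕ}
    (S : Set (MultiProj K n)) : Prop :=
  0 < eSet S ∧ ∀ S' : Set (MultiProj K n), S' ⊂ S → eSet S' = 0

/-- `q ∈ P^r` equals `ν(s)` for the point `s ∈ Y`. -/
def IsSegreOf {K : Type*} [Field K] {k : ℕ} {n : Fin k → ℕ}
    (q : ℙ K (PiTensorProduct K (fun i : Fin k => Fin (n i + 1) → K)))
    (s : MultiProj K n) : Prop :=
  ∃ c : K, q.rep = c • segreVec s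

/-- `q ∈ P^r` lies on the Segre variety `ν(Y)`. -/
def InSegre {K : Type*} [Field K] {k : ℕ} {n : Fin k → ℕ}
    (q : ℙ K (PiTensorProduct K (fun i : Fin k => Fin (n i + 1) → K))) : Prop :=
  ∃ y : MultiProj K n, IsSegreOf q y

/-- `S` is minimal: there is no projective line `L ⊆ P^r` contained in the Segre variety
`ν(Y)` meeting `ν(S)` in at least two points. -/
def IsMinimal {K : Type*} [Field K] {k : ℕ} {n : Fin k → ℕ}
    (S : Set (MultiProj K n)) : Prop :=
  ¬ ∃ W : Submodule K (PiTensorProduct K (fun i : Fin k => Fin (n i + 1) → K)),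
      Module.finrank K ↥W = 2 ∧
      (∀ x : ℙ K (PiTensorProduct K (fun i : Fin k => Fin (n i + 1) → K)),
        x.rep ∈ W → InSegre x) ∧
      ∃ x₁ x₂ : ℙ K (PiTensorProduct K (fun i : Fin k => Fin (n i + 1) → K)),
        x₁ ≠ x₂ ∧ x₁.rep ∈ W ∧ x₂.rep ∈ W ∧
        (∃ s₁ ∈ S, IsSegreOf x₁ s₁) ∧ (∃ s₂ ∈ S, IsSegreOf x₂ s₂)

/-- The `X`-rank of a point `q ∈ P^r`: the minimal cardinality of a finite `A ⊆ Y`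
with `q ∈ ⟨ν(A)⟩`. -/
noncomputable def xRank {K : Type*} [Field K] {k : ℕ} {n : Fin k → ℕ}
    (q : ℙ K (PiTensorProduct K (fun i : Fin k => Fin (n i + 1) → K))) : ℕ :=
  sInf {m : ℕ | ∃ A : Set (MultiProj K n), A.Finite ∧ A.ncard = m ∧
    q.rep ∈ Submodule.span K (segreVec '' A)}


section Aux
variable {K : Type*} [Field K] {V : Type*} [AddCommGroup V] [Module K V]
  {α : Type*}

noncomputable def rkA (f : α → V) (T : Set α) : ℕ :=
  Module.finrank K (Submodule.span K (f '' T))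

lemma rkA_le_ncard (f : α → V) {T : Set α} (hT : T.Finite) :
    rkA (K := K) f T ≤ T.ncard := by
  have hfin : (f '' T).Finite := hT.image f
  have h1 : Module.finrank K (Submodule.span K (f '' T)) ≤ (f '' T).ncard := by
    have h2 : Submodule.span K (f '' T) = Submodule.span K (hfin.toFinset : Set V) := by
      rw [Set.Finite.coe_toFinset]
    rw [h2]
    have h3 : Module.finrank K (Submodule.span K ((hfin.toFinset : Finset V) : Set V)) ≤ hfin.toFinset.card := finrank_span_finset_le_card (R := K) hfin.toFinset
    have h4 : (f '' T).ncard = hfin.toFinset.card := Set.ncard_eq_toFinset_card _ hfin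
    omega
  calc rkA (K := K) f T ≤ (f '' T).ncard := h1
    _ ≤ T.ncard := Set.ncard_image_le hT

lemma rkA_union_le (f : α → V) {T U : Set α} (hT : T.Finite) (hU : U.Finite) :
    rkA (K := K) f (T ∪ U) ≤ rkA (K := K) f T + rkA (K := K) f U := by
  unfold rkA
  rw [Set.image_union, Submodule.span_union]
  have : FiniteDimensional K (Submodule.span K (f '' T)) :=
    FiniteDimensional.span_of_finite K (hT.image f)
  have : FiniteDimensional K (Submodule.span K (f '' U)) :=
    FiniteDimensional.span_of_finite K (hU.image f)
  exact Submodule.finrank_add_le_finrank_add_finrank _ _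

lemma rkA_submod (f : α → V) {A B : Set α} (hA : A.Finite) (hB : B.Finite) :
    rkA (K := K) f (A ∪ B) + rkA (K := K) f (A ∩ B)
      ≤ rkA (K := K) f A + rkA (K := K) f B := by
  unfold rkA
  have hfA : FiniteDimensional K (Submodule.span K (f '' A)) :=
    FiniteDimensional.span_of_finite K (hA.image f)
  have hfB : FiniteDimensional K (Submodule.span K (f '' B)) :=
    FiniteDimensional.span_of_finite K (hB.image f)
  have h1 : Submodule.span K (f '' (A ∪ B))
      = Submodule.span K (f '' A) ⊔ Submodule.span K (f '' B) := by
    rw [Set.image_union, Submodule.span_union]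
  have h2 : Submodule.span K (f '' (A ∩ B))
      ≤ Submodule.span K (f '' A) ⊓ Submodule.span K (f '' B) := by
    apply Submodule.span_le.2
    rintro v ⟨x, ⟨hxA, hxB⟩, rfl⟩
    exact ⟨Submodule.subset_span ⟨x, hxA, rfl⟩, Submodule.subset_span ⟨x, hxB, rfl⟩⟩
  have hinf : FiniteDimensional K
      ((Submodule.span K (f '' A) ⊓ Submodule.span K (f '' B) : Submodule K V)) :=
    Submodule.finiteDimensional_inf_left _ _
  have h3 : Module.finrank K (Submodule.span K (f '' (A ∩ B)))
      ≤ Module.finrank K ((Submodule.span K (f '' A) ⊓ Submodule.span K (f '' B) : Submodule K V)) :=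
    Submodule.finrank_mono h2
  rw [h1]
  have := Submodule.finrank_sup_add_finrank_inf_eq
    (Submodule.span K (f '' A)) (Submodule.span K (f '' B))
  omega
end Aux

section Main
variable {K : Type*} [Field K] {k : ℕ} {n : Fin k → ℕ}

lemma eSet_eq (T : Set (MultiProj K n)) :
    eSet T = T.ncard - rkA (K := K) segreVec T := rfl

lemma eSet_mono {T U : Set (MultiProj K n)} (hTU : T ⊆ U) (hU : U.Finite) :
    eSet T ≤ eSet U := by
  have hT : T.Finite := hU.subset hTU
  have hd : U = T ∪ (U \ T) := by rw [Set.union_diff_cancel hTU]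
  have h1 : rkA (K := K) segreVec U ≤ rkA (K := K) segreVec T + (U \ T).ncard := by
    calc rkA (K := K) segreVec U = rkA (K := K) segreVec (T ∪ (U \ T)) := by rw [← hd]
      _ ≤ rkA (K := K) segreVec T + rkA (K := K) segreVec (U \ T) :=
          rkA_union_le _ hT (hU.diff : (U \ T).Finite)
      _ ≤ rkA (K := K) segreVec T + (U \ T).ncard := by
          exact Nat.add_le_add_left (rkA_le_ncard _ (hU.diff : (U \ T).Finite)) _
  have h2 : (U \ T).ncard + T.ncard = U.ncard :=
    Set.ncard_diff_add_ncard_of_subset hTU hU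
  have h3 := rkA_le_ncard (K := K) segreVec hT
  rw [eSet_eq, eSet_eq]
  omega

lemma eSet_supermod {A B : Set (MultiProj K n)} (hA : A.Finite) (hB : B.Finite) :
    eSet A + eSet B ≤ eSet (A ∪ B) + eSet (A ∩ B) := by
  have hc : (A ∪ B).ncard + (A ∩ B).ncard = A.ncard + B.ncard :=
    Set.ncard_union_add_ncard_inter A B hA hB
  have hs := rkA_submod (K := K) segreVec hA hB
  have r1 := rkA_le_ncard (K := K) segreVec hA
  have r2 := rkA_le_ncard (K := K) segreVec hB
  have r3 := rkA_le_ncard (K := K) segreVec (hA.union hB)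
  have r4 := rkA_le_ncard (K := K) segreVec (hA.inter_of_left B)
  rw [eSet_eq, eSet_eq, eSet_eq, eSet_eq]
  omega

end Main

theorem kernel_unique
    {K : Type*} [Field K] {k : ℕ} {n : Fin k → ℕ}
    (hk : 0 < k) (hn : ∀ i, 0 < n i)
    (S : Set (MultiProj K n)) (hSfin : S.Finite) (hdep : 0 < eSet S) :
    ∃! S' : Set (MultiProj K n), S' ⊆ S ∧ eSet S' = eSet S ∧
      ∀ S'' : Set (MultiProj K n), S'' ⊂ S' → eSet S'' < eSet S := by
  classical
  -- existence: a subset of S of minimal cardinality with eSet = eSet S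
  set M : Set ℕ := {m | ∃ T : Set (MultiProj K n), T ⊆ S ∧ T.ncard = m ∧ eSet T = eSet S} with hM
  have hMne : (sInf M) ∈ M := by
    apply Nat.sInf_mem
    exact ⟨S.ncard, S, le_refl S, rfl, rfl⟩
  obtain ⟨T, hTS, hTcard, hTe⟩ := hMne
  have hTfin : T.Finite := hSfin.subset hTS
  have hTmin : ∀ S'' : Set (MultiProj K n), S'' ⊂ T → eSet S'' < eSet S := by
    intro S'' hlt
    have hsub : S'' ⊆ S := hlt.subset.trans hTS
    have hle : eSet S'' ≤ eSet S := eSet_mono hsub hSfin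
    rcases lt_or_eq_of_le hle with h | h
    · exact h
    · exfalso
      have hmem : S''.ncard ∈ M := ⟨S'', hsub, rfl, h⟩
      have : sInf M ≤ S''.ncard := Nat.sInf_le hmem
      have hcard : S''.ncard < T.ncard := Set.ncard_lt_ncard hlt hTfin
      omega
  refine ⟨T, ⟨hTS, hTe, hTmin⟩, ?_⟩
  -- uniqueness
  rintro B ⟨hBS, hBe, hBmin⟩
  have hBfin : B.Finite := hSfin.subset hBS
  -- key: eSet (B ∩ T) = eSet S
  have hsup := eSet_supermod hBfin hTfin
  have hun : eSet (B ∪ T) ≤ eSet S := eSet_mono (Set.union_subset hBS hTS) hSfin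
  have hint : eSet S ≤ eSet (B ∩ T) := by omega
  have hBT : B ∩ T = B := by
    by_contra hne
    have hlt : B ∩ T ⊂ B := (Set.inter_subset_left).ssubset_of_ne hne
    have := hBmin _ hlt
    omega
  -- so B ⊆ T; if proper, contradiction with hTmin
  have hsubBT : B ⊆ T := by rw [← hBT]; exact Set.inter_subset_right
  by_contra hne
  have hlt : B ⊂ T := hsubBT.ssubset_of_ne hne
  have := hTmin _ hlt
  omega
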